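/- Let m be a nonnegative set function defined on all open cubes of ℝ^d with m(∅)=0, and define m^♯(E) := sup_{δ>0} inf{ Σ_i m(Q_i) : {Q_i}_{i∈I} a countable family of open cubes of diameter < δ with pairwise disjoint closures, each meeting E, whose union covers E up to Lebesgue measure zero } (and m^♯(∅)=0). If E₁, E₂ ⊆ ℝ^d satisfy dist(E₁,E₂) > 0, then m^♯(E₁ ∪ E₂) = m^♯(E₁) + m^♯(E₂). -/

import Mathlib

open Filter Set Topology MeasureTheory

/-- `Q` is an open axis-parallel cube of `ℝ^d` (with positive side length). -/
def IsOpenCube {d : ℕ} (Q : Set (Fin d → ℝ)) : Prop :=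
  ∃ (c : Fin d → ℝ) (r : ℝ), 0 < r ∧ Q = {y | ∀ i, y i ∈ Set.Ioo (c i) (c i + r)}

/-- `𝒬 ∈ F_δ(E)`: a countable family of open cubes of diameter `< δ` with pairwise
disjoint closures, each meeting `E`, covering `E` up to Lebesgue measure zero. -/
def CubeFam {d : ℕ} (E : Set (Fin d → ℝ)) (δ : ℝ)
    (𝒬 : Set (Set (Fin d → ℝ))) : Prop :=
  𝒬.Countable ∧
  (∀ Q ∈ 𝒬, IsOpenCube Q ∧ Metric.diam Q < δ ∧ (Q ∩ E).Nonempty) ∧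
  𝒬.Pairwise (fun Q Q' => Disjoint (closure Q) (closure Q')) ∧
  volume (E \ ⋃₀ 𝒬) = 0

/-- The Carathéodory-type construction
`m^♯(E) := sup_{δ>0} inf { Σ_i m(Q_i) : {Q_i} ∈ F_δ(E) }` (and `m^♯(∅) = 0`, which holds
automatically since the empty family belongs to `F_δ(∅)`). -/
noncomputable def msharp {d : ℕ} (m : Set (Fin d → ℝ) → ENNReal)
    (E : Set (Fin d → ℝ)) : ENNReal :=
  ⨆ (δ : ℝ) (_ : 0 < δ), ⨅ (𝒬 : Set (Set (Fin d → ℝ))) (_ : CubeFam E δ 𝒬),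
    ∑' Q : 𝒬, m Q

/-- Auxiliary: the inner infimum in the definition of `msharp`. -/
noncomputable def gE {d : ℕ} (m : Set (Fin d → ℝ) → ENNReal)
    (E : Set (Fin d → ℝ)) (δ : ℝ) : ENNReal :=
  ⨅ (𝒬 : Set (Set (Fin d → ℝ))) (_ : CubeFam E δ 𝒬), ∑' Q : 𝒬, m Q

lemma msharp_eq_iSup_gE {d : ℕ} (m : Set (Fin d → ℝ) → ENNReal)
    (E : Set (Fin d → ℝ)) : msharp m E = ⨆ (δ : ℝ) (_ : 0 < δ), gE m E δ := rfl

lemma IsOpenCube.isBounded {d : ℕ} {Q : Set (Fin d → ℝ)} (h : IsOpenCube Q) :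
    Bornology.IsBounded Q := by
  obtain ⟨c, r, hr, rfl⟩ := h
  refine (Metric.isBounded_closedBall (x := fun i => c i + r / 2) (r := r / 2)).subset ?_
  intro y hy
  rw [Metric.mem_closedBall, dist_pi_le_iff (by linarith)]
  intro i
  have h1 := (hy i).1
  have h2 := (hy i).2
  rw [Real.dist_eq, abs_le]
  constructor <;> linarith

lemma cube_dist_lt {d : ℕ} {Q : Set (Fin d → ℝ)} (hQ : IsOpenCube Q) {δ : ℝ}
    (hdiam : Metric.diam Q < δ) {x y : Fin d → ℝ} (hx : x ∈ Q) (hy : y ∈ Q) :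
    dist x y < δ :=
  (Metric.dist_le_diam_of_mem hQ.isBounded hx hy).trans_lt hdiam

lemma closure_cube_dist_lt {d : ℕ} {Q : Set (Fin d → ℝ)} (hQ : IsOpenCube Q) {δ : ℝ}
    (hdiam : Metric.diam Q < δ) {x y : Fin d → ℝ} (hx : x ∈ closure Q)
    (hy : y ∈ closure Q) : dist x y < δ := by
  have h := Metric.dist_le_diam_of_mem hQ.isBounded.closure hx hy
  rw [Metric.diam_closure] at h
  exact h.trans_lt hdiam

lemma gE_anti {d : ℕ} (m : Set (Fin d → ℝ) → ENNReal) (E : Set (Fin d → ℝ))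
    {δ δ' : ℝ} (h : δ' ≤ δ) : gE m E δ ≤ gE m E δ' := by
  refine le_iInf₂ fun 𝒬 h𝒬 => iInf₂_le 𝒬 ?_
  exact ⟨h𝒬.1, fun Q hQ => ⟨(h𝒬.2.1 Q hQ).1, ((h𝒬.2.1 Q hQ).2.1).trans_le h,
    (h𝒬.2.1 Q hQ).2.2⟩, h𝒬.2.2.1, h𝒬.2.2.2⟩

lemma msharp_eq_small {d : ℕ} (m : Set (Fin d → ℝ) → ENNReal)
    (E : Set (Fin d → ℝ)) {c : ℝ} (hc : 0 < c) :
    msharp m E = ⨆ δ : Set.Ioo (0:ℝ) c, gE m E δ := by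
  rw [msharp_eq_iSup_gE]
  apply le_antisymm
  · refine iSup₂_le fun δ hδ => ?_
    have h1 : (0:ℝ) < min δ (c / 2) := lt_min hδ (by linarith)
    have h2 : min δ (c / 2) < c := (min_le_right _ _).trans_lt (by linarith)
    calc gE m E δ ≤ gE m E (min δ (c / 2)) := gE_anti m E (min_le_left _ _)
      _ ≤ _ := le_iSup (fun δ : Set.Ioo (0:ℝ) c => gE m E δ) ⟨_, h1, h2⟩
  · exact iSup_le fun δ => le_iSup₂ (f := fun δ (_ : (0:ℝ) < δ) => gE m E δ)
      (δ : ℝ) δ.2.1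

/-- The key equality at a fixed small scale. -/
lemma gE_union {d : ℕ} (m : Set (Fin d → ℝ) → ENNReal)
    (E₁ E₂ : Set (Fin d → ℝ)) {ε δ : ℝ} (hδ : 0 < δ) (h2δ : 2 * δ ≤ ε)
    (hd : ∀ x ∈ E₁, ∀ y ∈ E₂, ε ≤ dist x y) :
    gE m (E₁ ∪ E₂) δ = gE m E₁ δ + gE m E₂ δ := by
  have hδε : δ < ε := by linarith
  -- no cube of diameter < δ can meet both E₁ and E₂
  have hnotboth : ∀ Q : Set (Fin d → ℝ), IsOpenCube Q → Metric.diam Q < δ →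
      (Q ∩ E₁).Nonempty → (Q ∩ E₂).Nonempty → False := by
    rintro Q hQ hdiam ⟨x, hxQ, hxE⟩ ⟨y, hyQ, hyE⟩
    have h1 := hd x hxE y hyE
    have h2 := cube_dist_lt hQ hdiam hxQ hyQ
    linarith
  apply le_antisymm
  · -- combine two families into one
    have key : ∀ 𝒬₁, CubeFam E₁ δ 𝒬₁ → ∀ 𝒬₂, CubeFam E₂ δ 𝒬₂ →
        gE m (E₁ ∪ E₂) δ ≤ (∑' Q : 𝒬₁, m Q) + ∑' Q : 𝒬₂, m Q := by
      intro 𝒬₁ h₁ 𝒬₂ h₂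
      have hdisj : Disjoint 𝒬₁ 𝒬₂ := by
        rw [Set.disjoint_left]
        intro Q hQ1 hQ2
        obtain ⟨hc1, hn1⟩ := (h₁.2.1 Q hQ1).2
        exact hnotboth Q (h₁.2.1 Q hQ1).1 hc1 hn1 (h₂.2.1 Q hQ2).2.2
      have hfam : CubeFam (E₁ ∪ E₂) δ (𝒬₁ ∪ 𝒬₂) := by
        refine ⟨h₁.1.union h₂.1, ?_, ?_, ?_⟩
        · rintro Q (hQ | hQ)
          · obtain ⟨h1, h2, x, hx1, hx2⟩ := h₁.2.1 Q hQ
            exact ⟨h1, h2, x, hx1, Or.inl hx2⟩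
          · obtain ⟨h1, h2, x, hx1, hx2⟩ := h₂.2.1 Q hQ
            exact ⟨h1, h2, x, hx1, Or.inr hx2⟩
        · -- pairwise disjoint closures
          have cross : ∀ Q ∈ 𝒬₁, ∀ Q' ∈ 𝒬₂, Disjoint (closure Q) (closure Q') := by
            intro Q hQ Q' hQ'
            obtain ⟨hc, hdm, x, hxQ, hxE⟩ := h₁.2.1 Q hQ
            obtain ⟨hc', hdm', y, hyQ, hyE⟩ := h₂.2.1 Q' hQ'
            rw [Set.disjoint_left]
            intro z hz hz'
            have d1 : dist x z < δ :=
              closure_cube_dist_lt hc hdm (subset_closure hxQ) hz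
            have d2 : dist z y < δ :=
              closure_cube_dist_lt hc' hdm' hz' (subset_closure hyQ)
            have h1 := hd x hxE y hyE
            have := dist_triangle x z y
            linarith
          rintro Q (hQ | hQ) Q' (hQ' | hQ') hne
          · exact h₁.2.2.1 hQ hQ' hne
          · exact cross Q hQ Q' hQ'
          · exact (cross Q' hQ' Q hQ).symm
          · exact h₂.2.2.1 hQ hQ' hne
        · refine measure_mono_null ?_
            (measure_union_null h₁.2.2.2 h₂.2.2.2)
          rintro x ⟨hx, hnx⟩
          rw [Set.sUnion_union] at hnx
          rcases hx with hx | hx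
          · exact Or.inl ⟨hx, fun h => hnx (Or.inl h)⟩
          · exact Or.inr ⟨hx, fun h => hnx (Or.inr h)⟩
      calc gE m (E₁ ∪ E₂) δ ≤ ∑' Q : ↥(𝒬₁ ∪ 𝒬₂), m Q := iInf₂_le _ hfam
        _ = (∑' Q : 𝒬₁, m Q) + ∑' Q : 𝒬₂, m Q :=
          ENNReal.summable.tsum_union_disjoint (f := m) hdisj ENNReal.summable
    have hrw : gE m E₁ δ + gE m E₂ δ =
        ⨅ (𝒬₁) (_ : CubeFam E₁ δ 𝒬₁) (𝒬₂) (_ : CubeFam E₂ δ 𝒬₂),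
          ((∑' Q : 𝒬₁, m Q) + ∑' Q : 𝒬₂, m Q) := by
      simp only [gE, ENNReal.iInf_add, ENNReal.add_iInf]
      exact iInf₂_comm _
    rw [hrw]
    exact le_iInf₂ fun 𝒬₁ h₁ => le_iInf₂ fun 𝒬₂ h₂ => key 𝒬₁ h₁ 𝒬₂ h₂
  · -- split a family for the union into two
    refine le_iInf₂ fun 𝒬 h𝒬 => ?_
    obtain ⟨hc, hQs, hpw, hcov⟩ := h𝒬
    set 𝒬₁ : Set (Set (Fin d → ℝ)) := {Q ∈ 𝒬 | (Q ∩ E₁).Nonempty} with h𝒬₁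
    set 𝒬₂ : Set (Set (Fin d → ℝ)) := {Q ∈ 𝒬 | (Q ∩ E₂).Nonempty} with h𝒬₂
    have hdisj : Disjoint 𝒬₁ 𝒬₂ := by
      rw [Set.disjoint_left]
      rintro Q ⟨hQ, hn1⟩ ⟨-, hn2⟩
      exact hnotboth Q (hQs Q hQ).1 (hQs Q hQ).2.1 hn1 hn2
    have hun : 𝒬₁ ∪ 𝒬₂ = 𝒬 := by
      ext Q
      constructor
      · rintro (hQ | hQ) <;> exact hQ.1
      · intro hQ
        obtain ⟨x, hxQ, hxE⟩ := (hQs Q hQ).2.2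
        rcases hxE with hx | hx
        · exact Or.inl ⟨hQ, x, hxQ, hx⟩
        · exact Or.inr ⟨hQ, x, hxQ, hx⟩
    have hfam1 : CubeFam E₁ δ 𝒬₁ := by
      refine ⟨hc.mono (Set.sep_subset _ _), fun Q hQ =>
        ⟨(hQs Q hQ.1).1, (hQs Q hQ.1).2.1, hQ.2⟩,
        hpw.mono (Set.sep_subset _ _), measure_mono_null ?_ hcov⟩
      rintro x ⟨hx, hnx⟩
      refine ⟨Or.inl hx, fun hxU => ?_⟩
      obtain ⟨Q, hQ, hxQ⟩ := hxU
      exact hnx ⟨Q, ⟨hQ, x, hxQ, hx⟩, hxQ⟩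
    have hfam2 : CubeFam E₂ δ 𝒬₂ := by
      refine ⟨hc.mono (Set.sep_subset _ _), fun Q hQ =>
        ⟨(hQs Q hQ.1).1, (hQs Q hQ.1).2.1, hQ.2⟩,
        hpw.mono (Set.sep_subset _ _), measure_mono_null ?_ hcov⟩
      rintro x ⟨hx, hnx⟩
      refine ⟨Or.inr hx, fun hxU => ?_⟩
      obtain ⟨Q, hQ, hxQ⟩ := hxU
      exact hnx ⟨Q, ⟨hQ, x, hxQ, hx⟩, hxQ⟩
    calc (∑' Q : 𝒬, m Q) = ∑' Q : ↥(𝒬₁ ∪ 𝒬₂), m Q := by rw [hun]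
      _ = (∑' Q : 𝒬₁, m Q) + ∑' Q : 𝒬₂, m Q :=
        ENNReal.summable.tsum_union_disjoint (f := m) hdisj ENNReal.summable
      _ ≥ gE m E₁ δ + gE m E₂ δ :=
        add_le_add (iInf₂_le 𝒬₁ hfam1) (iInf₂_le 𝒬₂ hfam2)

/-- (Lemma 7.2 (i).) If `dist(E₁, E₂) > 0` then `m^♯(E₁ ∪ E₂) = m^♯(E₁) + m^♯(E₂)`. -/
theorem stmt14 {d : ℕ} (m : Set (Fin d → ℝ) → ENNReal) (hm0 : m ∅ = 0)
    (E₁ E₂ : Set (Fin d → ℝ))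
    (hdist : ∃ ε : ℝ, 0 < ε ∧ ∀ x ∈ E₁, ∀ y ∈ E₂, ε ≤ dist x y) :
    msharp m (E₁ ∪ E₂) = msharp m E₁ + msharp m E₂ := by
  obtain ⟨ε, hε, hd⟩ := hdist
  have hc : (0:ℝ) < ε / 2 := by linarith
  haveI : Nonempty (Set.Ioo (0:ℝ) (ε / 2)) := ⟨⟨ε / 4, by constructor <;> linarith⟩⟩
  rw [msharp_eq_small m (E₁ ∪ E₂) hc, msharp_eq_small m E₁ hc, msharp_eq_small m E₂ hc]
  have heq : ∀ δ : Set.Ioo (0:ℝ) (ε / 2),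
      gE m (E₁ ∪ E₂) δ = gE m E₁ δ + gE m E₂ δ := by
    rintro ⟨δ, h1, h2⟩
    exact gE_union m E₁ E₂ h1 (by linarith) hd
  calc (⨆ δ : Set.Ioo (0:ℝ) (ε / 2), gE m (E₁ ∪ E₂) δ)
      = ⨆ δ : Set.Ioo (0:ℝ) (ε / 2), (gE m E₁ δ + gE m E₂ δ) := by
        exact iSup_congr heq
    _ = (⨆ δ : Set.Ioo (0:ℝ) (ε / 2), gE m E₁ δ) +
        ⨆ δ : Set.Ioo (0:ℝ) (ε / 2), gE m E₂ δ := by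
        refine (ENNReal.iSup_add_iSup ?_).symm
        rintro ⟨a, ha1, ha2⟩ ⟨b, hb1, hb2⟩
        refine ⟨⟨min a b, lt_min ha1 hb1, (min_le_left _ _).trans_lt ha2⟩, ?_⟩
        exact add_le_add (gE_anti m E₁ (min_le_left _ _)) (gE_anti m E₂ (min_le_right _ _))
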